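/- Under the hypotheses of the singleton-condition limit theorem, the odd limiting moments vanish: if (aₙ) satisfies φ(aₙ) = 0, the singleton condition, and uniform boundedness of mixed moments, then for every odd m, lim_{N→∞} φ((N^{-1/2} Σ_{n=1}^N aₙ)^m) = 0. -/

import Mathlib

open Finset

-- Expansion of a power of a sum in a noncommutative ring
lemma my_sum_pow {A : Type*} [Ring A] {N : ℕ} (a : Fin N → A) :
    ∀ m : ℕ, (∑ i, a i) ^ m = ∑ f : Fin m → Fin N, (List.ofFn fun j => a (f j)).prod := by
  intro m
  induction m with
  | zero => simp
  | succ m ih =>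
    have he := (Fin.consEquiv (fun _ : Fin (m+1) => Fin N)).sum_comp
      (fun f => (List.ofFn fun j => a (f j)).prod)
    rw [pow_succ', ih, ← he, Fintype.sum_prod_type, Finset.sum_mul_sum]
    refine Finset.sum_congr rfl fun i _ => Finset.sum_congr rfl fun f _ => ?_
    have h2 : (List.ofFn fun j => a ((Fin.consEquiv (fun _ : Fin (m+1) => Fin N)) (i, f) j)) =
        a i :: List.ofFn fun j => a (f j) := by
      rw [List.ofFn_succ]
      simp [Fin.consEquiv]
    rw [h2, List.prod_cons]

-- counting lemma
lemma my_card_le {m N r : ℕ} (hm : m ≠ 0) (S : Finset (Fin m → Fin N))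
    (hS : ∀ f ∈ S, (Finset.image f Finset.univ).card ≤ r) :
    S.card ≤ N ^ r * r ^ m := by
  classical
  rcases S.eq_empty_or_nonempty with h | ⟨f₀, hf₀⟩
  · simp [h]
  have hmpos : 0 < m := Nat.pos_of_ne_zero hm
  have hz : Fin m := ⟨0, hmpos⟩
  have hr : 0 < r := by
    have h1 : 0 < (Finset.image f₀ Finset.univ).card := by
      refine Finset.card_pos.2 ⟨f₀ hz, Finset.mem_image_of_mem _ (Finset.mem_univ _)⟩
    exact lt_of_lt_of_le h1 (hS f₀ hf₀)
  set L : (Fin m → Fin N) → List (Fin N) := fun f => (Finset.image f Finset.univ).sort (· ≤ ·)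
    with hL
  have hlen : ∀ f ∈ S, (L f).length ≤ r := fun f hf => by
    rw [hL]; simpa [Finset.length_sort] using hS f hf
  have hmem : ∀ (f : Fin m → Fin N) (j : Fin m), f j ∈ L f := fun f j => by
    rw [hL]
    simp only [Finset.mem_sort]
    exact Finset.mem_image_of_mem _ (Finset.mem_univ _)
  set F : (Fin m → Fin N) → (Fin r → Fin N) × (Fin m → Fin r) := fun f =>
    (fun i => (L f).getD i (f₀ hz),
     fun j => ⟨min ((L f).idxOf (f j)) (r - 1), by omega⟩) with hF
  have key : ∀ f ∈ S, ∀ j, f j = (F f).1 ((F f).2 j) := by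
    intro f hf j
    have h1 : (L f).idxOf (f j) < (L f).length := List.idxOf_lt_length_iff.2 (hmem f j)
    have h2 : (L f).idxOf (f j) < r := lt_of_lt_of_le h1 (hlen f hf)
    have h3 : min ((L f).idxOf (f j)) (r - 1) = (L f).idxOf (f j) := by omega
    simp only [hF, h3]
    rw [List.getD_eq_getElem _ _ h1, List.getElem_idxOf]
  have hinj : Set.InjOn F S := by
    intro f hf g hg hfg
    funext j
    rw [key f hf j, key g hg j, hfg]
  calc S.card ≤ Fintype.card ((Fin r → Fin N) × (Fin m → Fin r)) := by
        have := Finset.card_le_card_of_injOn F (fun f _ => Finset.mem_univ (F f)) hinj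
        simpa using this
    _ = N ^ r * r ^ m := by simp [Fintype.card_prod, Fintype.card_fun]


lemma my_tendsto_sqrt : Filter.Tendsto (fun N : ℕ => Real.sqrt N) Filter.atTop Filter.atTop := by
  rw [Filter.tendsto_atTop_atTop]
  intro b
  refine ⟨(⌈b⌉₊) ^ 2, fun N hN => ?_⟩
  have h1 : ((⌈b⌉₊ : ℝ)) ^ 2 ≤ (N : ℝ) := by exact_mod_cast hN
  have h2 : Real.sqrt (((⌈b⌉₊ : ℝ)) ^ 2) ≤ Real.sqrt N := Real.sqrt_le_sqrt h1
  rw [Real.sqrt_sq (by positivity)] at h2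
  exact le_trans (Nat.le_ceil b) h2

open scoped ComplexOrder in
theorem stmt15 {A : Type*} [Ring A] [Algebra ℂ A] [StarRing A] [StarModule ℂ A]
    (φ : A →ₗ[ℂ] ℂ) (hφ1 : φ 1 = 1) (hφpos : ∀ x : A, 0 ≤ φ (star x * x))
    (a : ℕ → A)
    (hsa : ∀ i, star (a i) = a i)
    (hmean : ∀ i, φ (a i) = 0)
    (hvar : ∀ i, φ (a i ^ 2) = 1)
    -- uniform mixed moments
    (hunif : ∀ k : ℕ, ∃ K : ℝ, ∀ n : Fin k → ℕ,
      ‖φ (List.ofFn fun j => a (n j)).prod‖ ≤ K)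
    -- singleton condition
    (hsing : ∀ (k : ℕ) (n : Fin k → ℕ) (s : Fin k),
      (∀ j, n j = n s → j = s) →
      φ (List.ofFn fun j => a (n j)).prod =
        φ (a (n s)) * φ ((List.ofFn fun j => a (n j)).eraseIdx s).prod)
    (m : ℕ) (hm : Odd m) :
    Filter.Tendsto
      (fun N : ℕ =>
        φ ((((Real.sqrt N : ℂ))⁻¹ • ∑ n ∈ Finset.range N, a n) ^ m))
      Filter.atTop (nhds 0) := by
  classical
  obtain ⟨K, hK⟩ := hunif m
  have hK0 : 0 ≤ K := le_trans (norm_nonneg _) (hK fun _ => 0)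
  set r := m / 2 with hr
  have hm2 : m = 2 * r + 1 := by
    rcases hm with ⟨t, ht⟩
    omega
  have hm0 : m ≠ 0 := by omega
  apply squeeze_zero_norm' (a := fun N : ℕ => ((r : ℝ) ^ m * K) / Real.sqrt N)
  · filter_upwards [Filter.eventually_ge_atTop 1] with N hN
    set s := Real.sqrt N with hsdef
    have hs : 0 < s := Real.sqrt_pos.2 (by exact_mod_cast hN)
    set S : Finset (Fin m → Fin N) :=
      Finset.univ.filter (fun f => ¬ ∃ s : Fin m, ∀ j, f j = f s → j = s) with hSdef
    have hzero : ∀ f : Fin m → Fin N, f ∉ S →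
        φ (List.ofFn fun j => a (f j)).prod = 0 := by
      intro f hf
      simp only [hSdef, Finset.mem_filter, Finset.mem_univ, true_and, not_not] at hf
      obtain ⟨t, ht⟩ := hf
      have h1 : ∀ j : Fin m, ((f j : ℕ)) = ((f t : ℕ)) → j = t := by
        intro j hj
        exact ht j (Fin.val_injective hj)
      have := hsing m (fun j => (f j : ℕ)) t h1
      rw [this, hmean, zero_mul]
    have hexp : φ ((((Real.sqrt N : ℂ))⁻¹ • ∑ n ∈ Finset.range N, a n) ^ m) =
        ((s : ℂ))⁻¹ ^ m * ∑ f ∈ S, φ (List.ofFn fun j => a (f j)).prod := by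
      rw [smul_pow, map_smul, smul_eq_mul]
      congr 1
      rw [← Fin.sum_univ_eq_sum_range, my_sum_pow, map_sum]
      rw [← Finset.sum_filter_of_ne (p := fun f => ¬ ∃ s : Fin m, ∀ j, f j = f s → j = s)]
      intro f _ hne
      by_contra hc
      exact hne (hzero f (by simp [hSdef, hc]))
    rw [hexp]
    -- image card bound for f in S
    have himg : ∀ f ∈ S, (Finset.image f Finset.univ).card ≤ r := by
      intro f hf
      simp only [hSdef, Finset.mem_filter, Finset.mem_univ, true_and] at hf
      push_neg at hf
      have hcard : m = ∑ v ∈ Finset.image f Finset.univ,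
          (Finset.univ.filter (fun j => f j = v)).card := by
        have := Finset.card_eq_sum_card_image f (Finset.univ : Finset (Fin m))
        simpa using this
      have h2 : ∀ v ∈ Finset.image f Finset.univ,
          2 ≤ (Finset.univ.filter (fun j => f j = v)).card := by
        intro v hv
        obtain ⟨t, _, ht⟩ := Finset.mem_image.1 hv
        obtain ⟨j, hj1, hj2⟩ := hf t
        have hsub : ({j, t} : Finset (Fin m)) ⊆ Finset.univ.filter (fun j' => f j' = v) := by
          intro x hx
          simp only [Finset.mem_insert, Finset.mem_singleton] at hx
          rcases hx with rfl | rfl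
          · simp [hj1, ht]
          · simp [ht]
        calc 2 = ({j, t} : Finset (Fin m)).card := (Finset.card_pair hj2).symm
          _ ≤ _ := Finset.card_le_card hsub
      have h3 : (Finset.image f Finset.univ).card * 2 ≤ m := by
        calc (Finset.image f Finset.univ).card * 2
            = ∑ _v ∈ Finset.image f Finset.univ, 2 := by
              rw [Finset.sum_const, smul_eq_mul, mul_comm]
          _ ≤ ∑ v ∈ Finset.image f Finset.univ,
              (Finset.univ.filter (fun j => f j = v)).card := Finset.sum_le_sum h2
          _ = m := hcard.symm
      omega
    have hcardS : (S.card : ℝ) ≤ (N : ℝ) ^ r * (r : ℝ) ^ m := by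
      have := my_card_le hm0 S himg
      exact_mod_cast this
    have hnorm : ‖((s : ℂ))⁻¹ ^ m * ∑ f ∈ S, φ (List.ofFn fun j => a (f j)).prod‖
        ≤ s⁻¹ ^ m * ((N : ℝ) ^ r * (r : ℝ) ^ m * K) := by
      rw [norm_mul, norm_pow, norm_inv, Complex.norm_real, Real.norm_eq_abs,
        abs_of_nonneg hs.le]
      have h1 : ‖∑ f ∈ S, φ (List.ofFn fun j => a (f j)).prod‖ ≤ S.card * K := by
        refine le_trans (norm_sum_le _ _) ?_
        have := Finset.sum_le_card_nsmul S
          (fun f => ‖φ (List.ofFn fun j => a (f j)).prod‖) K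
          (fun f _ => by simpa using hK fun j => (f j : ℕ))
        simpa [nsmul_eq_mul] using this
      exact mul_le_mul_of_nonneg_left
        (le_trans h1 (mul_le_mul_of_nonneg_right hcardS hK0)) (by positivity)
    refine le_trans hnorm (le_of_eq ?_)
    have hNs : (N : ℝ) = s ^ 2 := (Real.sq_sqrt (by positivity)).symm
    have e1 : s⁻¹ ^ m = (s ^ (2 * r) * s)⁻¹ := by
      rw [inv_pow, hm2, pow_succ]
    have e2 : (N : ℝ) ^ r = s ^ (2 * r) := by
      rw [hNs, ← pow_mul, mul_comm]
    rw [e1, e2]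
    have hsne : s ≠ 0 := hs.ne'
    field_simp
  · exact Filter.Tendsto.div_atTop tendsto_const_nhds my_tendsto_sqrt
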